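/- arXiv:2603.19202 — 6 statements merged into one kernel-verified Lean document; each statement's English description precedes it below -/
import Mathlib

section
/- For integers $0 \le s < r \le d/2$ with $r - s \ge 2$, setting $p = d - 2s$ and $q = r - s$ (so $p \ge 2q$, $q \ge 2$), one has $1/3 < (\binom{p}{q} - \binom{p}{q-1})/(\binom{p}{q-1} - \binom{p}{q-2}) < d + 1$. -/
set_option maxHeartbeats 800000 in
/-- For integers `0 ≤ s < r ≤ d/2` with `r - s ≥ 2`, setting `p = d - 2s`, `q = r - s`,
one has `1/3 < (C(p,q) - C(p,q-1))/(C(p,q-1) - C(p,q-2)) < d + 1`. -/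
theorem stmt_1 (d r s : ℕ) (hd : 0 < d) (hde : Even d)
    (hsr : s + 2 ≤ r) (hr : r ≤ d / 2) :
    1 / 3 < (((d - 2*s).choose (r - s) : ℝ) - ((d - 2*s).choose (r - s - 1) : ℝ)) /
        (((d - 2*s).choose (r - s - 1) : ℝ) - ((d - 2*s).choose (r - s - 2) : ℝ)) ∧
    (((d - 2*s).choose (r - s) : ℝ) - ((d - 2*s).choose (r - s - 1) : ℝ)) /
        (((d - 2*s).choose (r - s - 1) : ℝ) - ((d - 2*s).choose (r - s - 2) : ℝ)) < (d : ℝ) + 1 := by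
  obtain ⟨c, hc⟩ := hde
  obtain ⟨k, hk⟩ : ∃ k, r - s = k + 2 := ⟨r - s - 2, by omega⟩
  obtain ⟨t, ht⟩ : ∃ t, d - 2*s = 2*k + 4 + t := ⟨d - 2*s - (2*k+4), by omega⟩
  rw [hk, ht, show k+2-1 = k+1 from rfl, show k+2-2 = k from rfl]
  have hdge : 2*k + 4 + t ≤ d := by omega
  set p := 2*k + 4 + t with hp
  have e1 := Nat.choose_succ_right_eq p (k+1)
  have e2 := Nat.choose_succ_right_eq p k
  have s1 : p - (k+1) = k + 3 + t := by omega
  have s2 : p - k = k + 4 + t := by omega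
  rw [s1] at e1
  rw [s2] at e2
  have hB : 0 < p.choose (k+1) := Nat.choose_pos (by omega)
  have hC : 0 < p.choose k := Nat.choose_pos (by omega)
  set A := (p.choose (k+2) : ℝ) with hAdef
  set B := (p.choose (k+1) : ℝ) with hBdef
  set C := (p.choose k : ℝ) with hCdef
  have E1 : A * ((k:ℝ) + 2) = B * ((k:ℝ) + 3 + t) := by
    have := congrArg (Nat.cast : ℕ → ℝ) e1
    push_cast at this
    linarith [this]
  have E2 : B * ((k:ℝ) + 1) = C * ((k:ℝ) + 4 + t) := by
    have := congrArg (Nat.cast : ℕ → ℝ) e2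
    push_cast at this
    linarith [this]
  have hBp : (0:ℝ) < B := by rw [hBdef]; exact_mod_cast hB
  have hCp : (0:ℝ) < C := by rw [hCdef]; exact_mod_cast hC
  have hk0 : (0:ℝ) ≤ (k:ℝ) := Nat.cast_nonneg k
  have ht0 : (0:ℝ) ≤ (t:ℝ) := Nat.cast_nonneg t
  have hD : (0:ℝ) < B - C := by
    nlinarith [mul_pos hCp (show (0:ℝ) < (t:ℝ) + 3 by linarith)]
  have hdR : (2*(k:ℝ) + 4 + t) ≤ (d:ℝ) := by exact_mod_cast hdge
  have hprod : (0:ℝ) < ((k:ℝ)+2) * ((k:ℝ)+4+t) := by positivity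
  have key : (A - B) * (((k:ℝ)+2) * ((k:ℝ)+4+t)) = B * ((t:ℝ)+1) * ((k:ℝ)+4+t) := by
    linear_combination ((k:ℝ)+4+(t:ℝ)) * E1
  have key2 : (B - C) * (((k:ℝ)+2) * ((k:ℝ)+4+t)) = B * ((t:ℝ)+3) * ((k:ℝ)+2) := by
    linear_combination ((k:ℝ)+2) * E2
  constructor
  · rw [lt_div_iff₀ hD]
    have h : (1/3 * (B - C)) * (((k:ℝ)+2) * ((k:ℝ)+4+t)) <
        (A - B) * (((k:ℝ)+2) * ((k:ℝ)+4+t)) := by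
      rw [key]
      nlinarith [key2, mul_nonneg (mul_nonneg hBp.le hk0) ht0,
        mul_nonneg (mul_nonneg hBp.le ht0) ht0, mul_nonneg hBp.le ht0, hBp]
    exact lt_of_mul_lt_mul_right h hprod.le
  · rw [div_lt_iff₀ hD]
    have hdd : (2*(k:ℝ)+5+t) * (B * ((t:ℝ)+3) * ((k:ℝ)+2)) ≤
        ((d:ℝ)+1) * (B * ((t:ℝ)+3) * ((k:ℝ)+2)) := by
      apply mul_le_mul_of_nonneg_right (by linarith) (by positivity)
    have h : (A - B) * (((k:ℝ)+2) * ((k:ℝ)+4+t)) <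
        (((d:ℝ)+1) * (B - C)) * (((k:ℝ)+2) * ((k:ℝ)+4+t)) := by
      rw [key]
      have key2' : (((d:ℝ)+1) * (B - C)) * (((k:ℝ)+2) * ((k:ℝ)+4+t)) =
          ((d:ℝ)+1) * (B * ((t:ℝ)+3) * ((k:ℝ)+2)) := by
        rw [mul_assoc, key2]
      rw [key2']
      refine lt_of_lt_of_le ?_ hdd
      nlinarith [hBp,
        mul_nonneg (mul_nonneg (mul_nonneg hBp.le hk0) hk0) ht0,
        mul_nonneg (mul_nonneg hBp.le hk0) hk0,
        mul_nonneg (mul_nonneg hBp.le hk0) ht0,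
        mul_nonneg (mul_nonneg (mul_nonneg hBp.le hk0) ht0) ht0,
        mul_nonneg hBp.le hk0, mul_nonneg hBp.le ht0,
        mul_nonneg (mul_nonneg hBp.le ht0) ht0]
    exact lt_of_mul_lt_mul_right h hprod.le
end

section
/- Let $\gamma = (\gamma_0, \ldots, \gamma_{d/2})$ be a nonnegative vector with $\gamma_0 = 1$, and define $g_\ell = \sum_{j=0}^{\ell} b_{\ell,j}\gamma_j$ where $b_{i,j} = \binom{d-2j}{i-j} - \binom{d-2j}{i-j-1}$. Then for all $0 \le \ell \le d/2 - 1$, $g_{\ell+1} > \frac{1}{3} g_\ell$. -/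
/-- `bcoef d i j` is `C(d-2j, i-j) - C(d-2j, i-j-1)` (with the convention
`C(n,-1) = 0`), written as `2*C(d-2j, i-j) - C(d-2j+1, i-j)` using Pascal's rule
so that the `i = j` case is handled correctly over `ℕ`-indices. -/
noncomputable def bcoef (d i j : ℕ) : ℝ :=
  2 * ((d - 2*j).choose (i - j) : ℝ) - ((d - 2*j + 1).choose (i - j) : ℝ)

lemma key (n k : ℕ) (h : 2*(k+1) ≤ n) :
    (1/3) * (2*((n.choose k : ℝ)) - (((n+1).choose k : ℝ))) <
      2*((n.choose (k+1) : ℝ)) - (((n+1).choose (k+1) : ℝ)) := by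
  rcases k with _ | m
  · have h2 : (2:ℝ) ≤ (n:ℝ) := by exact_mod_cast (by omega : 2 ≤ n)
    simp [Nat.choose_one_right]
    linarith
  · obtain ⟨r, hr⟩ : ∃ r, n = m + r + 1 := ⟨n - m - 1, by omega⟩
    have hrm : m + 3 ≤ r := by omega
    have e1n : n.choose (m+1) * (m+1) = n.choose m * (r+1) := by
      have := Nat.choose_succ_right_eq n m
      rwa [show n - m = r+1 by omega] at this
    have e2n : n.choose (m+2) * (m+2) = n.choose (m+1) * r := by
      have := Nat.choose_succ_right_eq n (m+1)
      rwa [show n - (m+1) = r by omega] at this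
    have e1 : (n.choose (m+1) : ℝ) * (m+1) = (n.choose m : ℝ) * (r+1) := by
      exact_mod_cast e1n
    have e2 : (n.choose (m+2) : ℝ) * (m+2) = (n.choose (m+1) : ℝ) * r := by
      exact_mod_cast e2n
    have hA : (1:ℝ) ≤ (n.choose m : ℝ) := by
      exact_mod_cast Nat.choose_pos (show m ≤ n by omega)
    have hrR : (m:ℝ) + 3 ≤ (r:ℝ) := by exact_mod_cast hrm
    have h1 : ((n+1).choose (m+1) : ℝ) = (n.choose (m+1) : ℝ) + (n.choose m : ℝ) := by
      rw [Nat.choose_succ_succ]; push_cast; ring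
    have h2 : ((n+1).choose (m+2) : ℝ) = (n.choose (m+2) : ℝ) + (n.choose (m+1) : ℝ) := by
      rw [Nat.choose_succ_succ]; push_cast; ring
    rw [h1, h2]
    set A := (n.choose m : ℝ)
    set B := (n.choose (m+1) : ℝ)
    set Cc := (n.choose (m+2) : ℝ)
    have hQ : (3:ℝ)*r*(r+1) + (m+1)*(m+2) - 4*(r+1)*(m+2) ≥ 6 := by nlinarith
    have hID : (3*Cc + A - 4*B)*(((m:ℝ)+1)*((m:ℝ)+2))
        = A * ((3:ℝ)*r*(r+1) + (m+1)*(m+2) - 4*(r+1)*(m+2)) := by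
      linear_combination (3*((m:ℝ)+1))*e2 + (3*(r:ℝ) - 4*((m:ℝ)+2))*e1
    have hm2 : (0:ℝ) < ((m:ℝ)+1)*((m:ℝ)+2) := by positivity
    nlinarith [hID, hQ, hA, hm2]

lemma bcoef_key (d ℓ j : ℕ) (hj : j ≤ ℓ) (hℓ : 2*(ℓ+1) ≤ d) :
    (1/3) * bcoef d ℓ j < bcoef d (ℓ+1) j := by
  unfold bcoef
  rw [show ℓ + 1 - j = (ℓ - j) + 1 from by omega]
  exact key (d - 2*j) (ℓ - j) (by omega)

/-- Let `γ = (γ_0, …, γ_{d/2})` be a nonnegative vector with `γ_0 = 1` and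
`g_ℓ = ∑_{j ≤ ℓ} b_{ℓ,j} γ_j`. Then `g_{ℓ+1} > g_ℓ / 3` for all `0 ≤ ℓ ≤ d/2 - 1`. -/
theorem stmt_2 (d : ℕ) (hde : Even d) (hd : 2 ≤ d) (γ : ℕ → ℝ)
    (hγ0 : γ 0 = 1) (hγnn : ∀ j ≤ d / 2, 0 ≤ γ j)
    (g : ℕ → ℝ)
    (hg : ∀ ℓ ≤ d / 2, g ℓ = ∑ j ∈ Finset.range (ℓ + 1), bcoef d ℓ j * γ j) :
    ∀ ℓ ≤ d / 2 - 1, g (ℓ + 1) > (1 / 3) * g ℓ := by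
  intro ℓ hℓ
  obtain ⟨m, hm⟩ := hde
  have h2ℓ : 2*(ℓ+1) ≤ d := by omega
  rw [hg ℓ (by omega), hg (ℓ+1) (by omega), Finset.sum_range_succ]
  have hlast : (0:ℝ) ≤ bcoef d (ℓ+1) (ℓ+1) * γ (ℓ+1) := by
    have hb : bcoef d (ℓ+1) (ℓ+1) = 1 := by simp [bcoef]; norm_num
    rw [hb, one_mul]
    exact hγnn (ℓ+1) (by omega)
  have hsum : (1/3) * ∑ j ∈ Finset.range (ℓ+1), bcoef d ℓ j * γ j
      < ∑ j ∈ Finset.range (ℓ+1), bcoef d (ℓ+1) j * γ j := by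
    rw [Finset.mul_sum]
    apply Finset.sum_lt_sum
    · intro j hjmem
      have hj : j ≤ ℓ := by simpa [Nat.lt_succ_iff] using hjmem
      have hk := bcoef_key d ℓ j hj h2ℓ
      have hγj : 0 ≤ γ j := hγnn j (by omega)
      calc (1/3) * (bcoef d ℓ j * γ j) = ((1/3) * bcoef d ℓ j) * γ j := by ring
        _ ≤ bcoef d (ℓ+1) j * γ j := mul_le_mul_of_nonneg_right hk.le hγj
    · refine ⟨0, Finset.mem_range.mpr (by omega), ?_⟩
      have hk := bcoef_key d ℓ 0 (by omega) h2ℓ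
      rw [hγ0]
      calc (1/3) * (bcoef d ℓ 0 * 1) = (1/3) * bcoef d ℓ 0 := by ring
        _ < bcoef d (ℓ+1) 0 := hk
        _ = bcoef d (ℓ+1) 0 * 1 := by ring
  linarith
end

section
/- For any positive integers $a$ and $k$, the $k$-th pseudopower satisfies $a^{\langle k \rangle} \le a^{(k+1)/k}$, where $a^{\langle k \rangle} = \binom{n_k+1}{k+1} + \binom{n_{k-1}+1}{k} + \cdots + \binom{n_j+1}{j+1}$ is defined from the $k$-th Macaulay representation $a = \binom{n_k}{k} + \cdots + \binom{n_j}{j}$. -/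
open Finset

/-- Real binomial-coefficient function `x ↦ C(x, r)`. -/
noncomputable def Bf (r : ℕ) (x : ℝ) : ℝ := (∏ t ∈ range r, (x - t)) / (r.factorial : ℝ)

lemma Bf_factor_nonneg {r : ℕ} {x : ℝ} (h : (r : ℝ) - 1 ≤ x) {t : ℕ} (ht : t ∈ range r) :
    0 ≤ x - t := by
  have := mem_range.mp ht
  have : (t : ℝ) + 1 ≤ r := by exact_mod_cast this
  linarith

lemma Bf_nat (r m : ℕ) : Bf r (m : ℝ) = (m.choose r : ℝ) := by
  rcases le_or_gt r m with h | h
  · have : (∏ t ∈ range r, ((m : ℝ) - t)) = ((m.descFactorial r : ℕ) : ℝ) := by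
      rw [Nat.descFactorial_eq_prod_range]
      push_cast
      refine Finset.prod_congr rfl fun i hi => ?_
      have : i ≤ m := le_trans (le_of_lt (mem_range.mp hi)) h
      push_cast [this]
      ring
    rw [Bf, this, Nat.descFactorial_eq_factorial_mul_choose]
    push_cast
    field_simp
  · have hz : (∏ t ∈ range r, ((m : ℝ) - t)) = 0 := by
      apply Finset.prod_eq_zero (mem_range.mpr h)
      simp
    rw [Bf, hz, Nat.choose_eq_zero_of_lt h]
    simp

lemma Bf_nonneg {r : ℕ} {x : ℝ} (h : (r : ℝ) - 1 ≤ x) : 0 ≤ Bf r x := by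
  apply div_nonneg _ (by positivity)
  exact Finset.prod_nonneg fun t ht => Bf_factor_nonneg h ht

lemma Bf_mono {r : ℕ} {x y : ℝ} (hx : (r : ℝ) - 1 ≤ x) (hxy : x ≤ y) : Bf r x ≤ Bf r y := by
  unfold Bf
  gcongr with t ht
  intro t ht
  exact Bf_factor_nonneg hx ht

/-- Pascal rule for `Bf`. -/
lemma Bf_pascal (s : ℕ) (x : ℝ) : Bf (s+1) x = Bf (s+1) (x-1) + Bf s (x-1) := by
  have h1 : (∏ t ∈ range (s+1), (x - t)) = x * ∏ t ∈ range s, ((x-1) - t) := by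
    rw [Finset.prod_range_succ']
    have h0 : (x - ((0:ℕ):ℝ)) = x := by simp
    rw [h0, mul_comm]
    congr 1
    refine Finset.prod_congr rfl fun i _ => ?_
    push_cast
    ring
  have h2 : (∏ t ∈ range (s+1), ((x-1) - t)) = (∏ t ∈ range s, ((x-1) - t)) * (x - 1 - s) := by
    rw [Finset.prod_range_succ]
  have hf : ((s+1).factorial : ℝ) = (s+1) * (s.factorial : ℝ) := by
    push_cast [Nat.factorial_succ]; ring
  rw [Bf, Bf, Bf, h1, h2, hf]
  have hs0 : (s.factorial : ℝ) ≠ 0 := by positivity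
  field_simp
  ring

lemma Bf_succ_ratio (r : ℕ) (x : ℝ) : Bf (r+1) x = Bf r x * (x - r) / (r+1) := by
  rw [Bf, Bf, Finset.prod_range_succ]
  have hf : ((r+1).factorial : ℝ) = (r+1) * (r.factorial : ℝ) := by
    push_cast [Nat.factorial_succ]; ring
  rw [hf]
  have h1 : (r.factorial : ℝ) ≠ 0 := by positivity
  have h2 : ((r:ℝ)+1) ≠ 0 := by positivity
  field_simp

lemma prod_interp (r : ℕ) (s : ℝ) (hs0 : 0 ≤ s) (hs1 : s ≤ 1) (a d : ℕ → ℝ)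
    (ha : ∀ t, t < r → 0 ≤ a t) (hd : ∀ t, t < r → 0 ≤ d t) :
    ∏ t ∈ range r, (a t + s * d t)
      ≤ (1-s) * ∏ t ∈ range r, a t + s * ∏ t ∈ range r, (a t + d t) := by
  induction r with
  | zero => simp
  | succ r ih =>
    have hA : (0:ℝ) ≤ ∏ t ∈ range r, a t :=
      Finset.prod_nonneg fun t ht => ha t (lt_trans (mem_range.mp ht) (Nat.lt_succ_self r))
    have hB : (0:ℝ) ≤ ∏ t ∈ range r, (a t + d t) :=
      Finset.prod_nonneg fun t ht => by
        have h := mem_range.mp ht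
        have := ha t (lt_trans h (Nat.lt_succ_self r))
        have := hd t (lt_trans h (Nat.lt_succ_self r))
        linarith
    have hAB : (∏ t ∈ range r, a t) ≤ ∏ t ∈ range r, (a t + d t) := by
      apply Finset.prod_le_prod
      · intro t ht; exact ha t (lt_trans (mem_range.mp ht) (Nat.lt_succ_self r))
      · intro t ht
        have := hd t (lt_trans (mem_range.mp ht) (Nat.lt_succ_self r))
        linarith
    have ihr := ih (fun t ht => ha t (lt_trans ht (Nat.lt_succ_self r)))
      (fun t ht => hd t (lt_trans ht (Nat.lt_succ_self r)))
    have har : 0 ≤ a r := ha r (Nat.lt_succ_self r)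
    have hdr : 0 ≤ d r := hd r (Nat.lt_succ_self r)
    rw [Finset.prod_range_succ, Finset.prod_range_succ, Finset.prod_range_succ]
    have hfac : 0 ≤ a r + s * d r := by nlinarith
    calc (∏ t ∈ range r, (a t + s * d t)) * (a r + s * d r)
        ≤ ((1-s) * ∏ t ∈ range r, a t + s * ∏ t ∈ range r, (a t + d t)) * (a r + s * d r) := by
          apply mul_le_mul_of_nonneg_right ihr hfac
      _ ≤ (1-s) * ((∏ t ∈ range r, a t) * a r) + s * ((∏ t ∈ range r, (a t + d t)) * (a r + d r)) := by
          nlinarith [mul_nonneg (mul_nonneg hs0 hdr) (sub_nonneg.mpr hAB),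
            mul_nonneg (mul_nonneg (mul_nonneg hs0 hdr) (sub_nonneg.mpr hs1)) (sub_nonneg.mpr hAB)]

lemma Bf_chord {k n : ℕ} (hkn : k ≤ n) {x : ℝ} (hx0 : (n:ℝ) ≤ x) (hx1 : x ≤ (n:ℝ)+1) :
    Bf k x ≤ (1 - (x - n)) * Bf k n + (x - n) * Bf k ((n:ℝ)+1) := by
  have key := prod_interp k (x - n) (by linarith) (by linarith)
    (fun t => (n:ℝ) - t) (fun _ => 1)
    (fun t ht => by
      show (0:ℝ) ≤ (n:ℝ) - (t:ℝ)
      have h1 : (t:ℝ) < k := by exact_mod_cast ht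
      have hkn' : (k:ℝ) ≤ n := by exact_mod_cast hkn
      linarith)
    (fun t _ => zero_le_one)
  have e1 : ∀ t : ℕ, (n:ℝ) - t + (x - n) * 1 = x - t := fun t => by ring
  have e2 : ∀ t : ℕ, (n:ℝ) - t + 1 = ((n:ℝ)+1) - t := fun t => by ring
  simp only [e1, e2] at key
  have hrw : (1 - (x - (n:ℝ))) * ((∏ t ∈ range k, ((n:ℝ) - t)) / (k.factorial : ℝ))
      + (x - n) * ((∏ t ∈ range k, ((n:ℝ)+1 - t)) / (k.factorial : ℝ))
      = ((1 - (x - (n:ℝ))) * (∏ t ∈ range k, ((n:ℝ) - t))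
        + (x - n) * (∏ t ∈ range k, ((n:ℝ)+1 - t))) / (k.factorial : ℝ) := by
    ring
  rw [Bf, Bf, Bf, hrw]
  have hf : (0:ℝ) < (k.factorial : ℝ) := by positivity
  exact div_le_div_of_nonneg_right key hf.le

lemma ni_ge (j k : ℕ) (n : ℕ → ℕ) (hnj : j ≤ n j)
    (hmono : ∀ i, j ≤ i → i < k → n i < n (i+1)) :
    ∀ i, j ≤ i → i ≤ k → i ≤ n i := by
  intro i hji
  induction i, hji using Nat.le_induction with
  | base => intro _; exact hnj
  | succ i hji ih =>
    intro hik
    have h1 : i < k := lt_of_lt_of_le (Nat.lt_succ_self i) hik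
    have h2 := hmono i hji h1
    have h3 := ih (le_of_lt h1)
    omega

lemma sum_lt (j : ℕ) (n : ℕ → ℕ) (hj : 1 ≤ j) (hnj : j ≤ n j) :
    ∀ k, j ≤ k → (∀ i, j ≤ i → i < k → n i < n (i+1)) →
    (∑ i ∈ Finset.Icc j k, (n i).choose i) < (n k + 1).choose k := by
  intro k hjk
  induction k, hjk using Nat.le_induction with
  | base =>
    intro _
    rw [Finset.Icc_self, Finset.sum_singleton]
    obtain ⟨j', rfl⟩ : ∃ j', j = j'+1 := ⟨j-1, by omega⟩
    rw [Nat.choose_succ_succ]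
    simp only [Nat.succ_eq_add_one]
    have := Nat.choose_pos (show j' ≤ n (j'+1) by omega)
    omega
  | succ k hjk ih =>
    intro hmono
    rw [Finset.sum_Icc_succ_top (le_trans hjk (Nat.le_succ k))]
    have ih' := ih (fun i hi hik => hmono i hi (lt_trans hik (Nat.lt_succ_self k)))
    have hnn : n k + 1 ≤ n (k+1) := hmono k hjk (Nat.lt_succ_self k)
    have h2 : (n k + 1).choose k ≤ (n (k+1)).choose k := Nat.choose_le_choose k hnn
    have h3 : (n (k+1) + 1).choose (k+1) = (n (k+1)).choose k + (n (k+1)).choose (k+1) :=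
      Nat.choose_succ_succ _ _
    omega

lemma main_bound (j : ℕ) (n : ℕ → ℕ) (hj : 1 ≤ j) (hnj : j ≤ n j) :
    ∀ k, j ≤ k → (∀ i, j ≤ i → i < k → n i < n (i+1)) → ∀ x : ℝ, ((n k : ℝ)) ≤ x →
    (∑ i ∈ Finset.Icc j k, ((n i).choose i : ℝ)) ≤ Bf k x →
    (∑ i ∈ Finset.Icc j k, ((n i).choose (i+1) : ℝ))
      ≤ (∑ i ∈ Finset.Icc j k, ((n i).choose i : ℝ)) * (x - k) / (k+1) := by
  intro k hjk
  induction k, hjk using Nat.le_induction with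
  | base =>
    intro _ x hx _
    rw [Finset.Icc_self, Finset.sum_singleton, Finset.sum_singleton]
    have hid : ((n j).choose (j+1) : ℝ) * (j+1) = ((n j).choose j : ℝ) * ((n j : ℝ) - j) := by
      have := Nat.choose_succ_right_eq (n j) j
      have hc : ((n j).choose (j+1) * (j+1) : ℕ) = ((n j).choose j * (n j - j) : ℕ) := this
      have := congrArg (Nat.cast : ℕ → ℝ) hc
      push_cast [Nat.cast_sub hnj] at this
      convert this using 2 <;> push_cast <;> ring
    have hj1 : (0:ℝ) < (j:ℝ)+1 := by positivity
    have hchoose : (0:ℝ) ≤ ((n j).choose j : ℝ) := by positivity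
    rw [le_div_iff₀ hj1, hid]
    apply mul_le_mul_of_nonneg_left (by linarith) hchoose
  | succ k hjk ih =>
    intro hmono x hx hA
    set K := k + 1 with hK
    set N := n K with hN
    have hmono' : ∀ i, j ≤ i → i < k → n i < n (i+1) :=
      fun i hi hik => hmono i hi (lt_trans hik (Nat.lt_succ_self k))
    have hKN : K ≤ N := ni_ge j K n hnj hmono K (le_trans hjk (Nat.le_succ k)) le_rfl
    have hnkN : n k + 1 ≤ N := hmono k hjk (Nat.lt_succ_self k)
    -- split sums
    rw [Finset.sum_Icc_succ_top (le_trans hjk (Nat.le_succ k)),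
        Finset.sum_Icc_succ_top (le_trans hjk (Nat.le_succ k))] at *
    set A' : ℝ := ∑ i ∈ Finset.Icc j k, ((n i).choose i : ℝ) with hA'
    set T' : ℝ := ∑ i ∈ Finset.Icc j k, ((n i).choose (i+1) : ℝ) with hT'
    set b : ℝ := ((N.choose K : ℕ) : ℝ) with hb
    have hA'nonneg : 0 ≤ A' := Finset.sum_nonneg fun i _ => by positivity
    have hbnonneg : 0 ≤ b := by positivity
    -- x₁ := min x (N+1)
    set x₁ : ℝ := min x ((N:ℝ)+1) with hx₁
    have hx₁N : (N:ℝ) ≤ x₁ := le_min hx (by linarith)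
    have hx₁x : x₁ ≤ x := min_le_left _ _
    have hx₁N1 : x₁ ≤ (N:ℝ)+1 := min_le_right _ _
    have hKr : (K:ℝ) ≤ (N:ℝ) := by exact_mod_cast hKN
    have hx₁K : (K:ℝ) ≤ x₁ := le_trans hKr hx₁N
    have hKpos : (0:ℝ) < K := by positivity
    have hK1pos : (0:ℝ) < (K:ℝ)+1 := by positivity
    -- A ≤ Bf K x₁
    have hAx₁ : A' + b ≤ Bf K x₁ := by
      rcases min_cases x ((N:ℝ)+1) with ⟨he, _⟩ | ⟨he, hle⟩
      · rw [hx₁, he]; exact hA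
      · rw [hx₁, he]
        have hslt := sum_lt j n hj hnj K (le_trans hjk (Nat.le_succ k)) hmono
        rw [Finset.sum_Icc_succ_top (le_trans hjk (Nat.le_succ k))] at hslt
        have : A' + b < ((N+1).choose K : ℝ) := by
          rw [hA', hb]
          exact_mod_cast hslt
        have hBfn : Bf K ((N:ℝ)+1) = ((N+1).choose K : ℝ) := by
          have := Bf_nat K (N+1)
          push_cast at this ⊢
          linarith [this]
        linarith
    -- Pascal and monotonicity
    have hpas : Bf K x₁ = Bf K (x₁ - 1) + Bf k (x₁ - 1) := Bf_pascal k x₁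
    have hmon1 : Bf K (x₁ - 1) ≤ Bf K (N:ℝ) :=
      Bf_mono (by linarith : (K:ℝ) - 1 ≤ x₁ - 1) (by linarith)
    have hBfN : Bf K (N:ℝ) = b := by rw [hb, Bf_nat]
    have hA'B : A' ≤ Bf k (x₁ - 1) := by linarith
    -- chord bound
    have hchord : A' ≤ (x₁ - N) * ((N.choose k : ℕ) : ℝ) := by
      have hc := Bf_chord hKN hx₁N hx₁N1
      have hBfN1 : Bf K ((N:ℝ)+1) = ((N+1).choose K : ℝ) := by
        have := Bf_nat K (N+1)
        push_cast at this ⊢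
        linarith [this]
      have hNat : ((N+1).choose K : ℝ) = ((N.choose k : ℕ) : ℝ) + b := by
        rw [hb]
        have : (N+1).choose K = N.choose k + N.choose K := Nat.choose_succ_succ _ _
        push_cast [this]
        ring
      nlinarith [hc, hAx₁]
    -- IH at (k, x₁ - 1)
    have hxk1 : ((n k : ℝ)) ≤ x₁ - 1 := by
      have : ((n k : ℝ)) + 1 ≤ (N:ℝ) := by exact_mod_cast hnkN
      linarith
    have hIH := ih hmono' (x₁ - 1) hxk1 hA'B
    -- top term identity
    have htop : ((N.choose (K+1) : ℕ) : ℝ) * ((K:ℝ)+1) = b * ((N:ℝ) - K) := by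
      have hc : (N.choose (K+1) * (K+1) : ℕ) = (N.choose K * (N - K) : ℕ) :=
        Nat.choose_succ_right_eq N K
      have := congrArg (Nat.cast : ℕ → ℝ) hc
      push_cast [Nat.cast_sub hKN] at this
      rw [hb]
      push_cast
      linarith [this]
    -- key inequality
    have hCk : (0:ℝ) ≤ ((N.choose k : ℕ) : ℝ) := by positivity
    have hratio : ((N.choose k : ℕ) : ℝ) * ((N:ℝ) - k) = (K:ℝ) * b := by
      have hc : (N.choose (k+1) * (k+1) : ℕ) = (N.choose k * (N - k) : ℕ) :=
        Nat.choose_succ_right_eq N k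
      have := congrArg (Nat.cast : ℕ → ℝ) hc
      have hkN : k ≤ N := le_trans (Nat.le_succ k) hKN
      push_cast [Nat.cast_sub hkN] at this
      rw [hb, hK]
      push_cast
      linarith [this]
    have hkey : A' * (x₁ - K) ≤ (K:ℝ) * b * (x₁ - (N:ℝ)) := by
      have h1 : A' * (x₁ - K) ≤ (x₁ - N) * ((N.choose k : ℕ) : ℝ) * (x₁ - K) := by
        apply mul_le_mul_of_nonneg_right hchord (by linarith)
      have h2 : (x₁ - N) * ((N.choose k : ℕ) : ℝ) * (x₁ - K) ≤
          (x₁ - N) * ((N.choose k : ℕ) : ℝ) * ((N:ℝ) - k) := by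
        apply mul_le_mul_of_nonneg_left _ (mul_nonneg (by linarith) hCk)
        have : (K:ℝ) = (k:ℝ) + 1 := by rw [hK]; push_cast; ring
        linarith
      calc A' * (x₁ - K) ≤ (x₁ - N) * ((N.choose k : ℕ) : ℝ) * (x₁ - K) := h1
        _ ≤ (x₁ - N) * ((N.choose k : ℕ) : ℝ) * ((N:ℝ) - k) := h2
        _ = (K:ℝ) * b * (x₁ - (N:ℝ)) := by rw [mul_assoc, hratio]; ring
    -- conclude at x₁
    have hkk : ((k:ℝ)+1) = (K:ℝ) := by push_cast [hK]; ring
    have hstep : T' + ((N.choose (K+1) : ℕ) : ℝ)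
        ≤ (A' + b) * (x₁ - K) / ((K:ℝ)+1) := by
      have hIH' : T' ≤ A' * (x₁ - K) / (K:ℝ) := by
        have : x₁ - 1 - (k:ℝ) = x₁ - K := by push_cast [hK]; ring
        rw [this, hkk] at hIH
        exact hIH
      have htop' : ((N.choose (K+1) : ℕ) : ℝ) = b * ((N:ℝ) - K) / ((K:ℝ)+1) := by
        rw [eq_div_iff (ne_of_gt hK1pos)]
        linarith
      have hdiff : (A' + b) * (x₁ - K) / ((K:ℝ)+1)
          - (b * ((N:ℝ) - K) / ((K:ℝ)+1) + A' * (x₁ - K) / (K:ℝ))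
          = ((K:ℝ) * b * (x₁ - (N:ℝ)) - A' * (x₁ - K)) / ((K:ℝ) * ((K:ℝ)+1)) := by
        field_simp
        ring
      have hnn : 0 ≤ ((K:ℝ) * b * (x₁ - (N:ℝ)) - A' * (x₁ - K)) / ((K:ℝ) * ((K:ℝ)+1)) :=
        div_nonneg (by linarith) (by positivity)
      linarith [hnn, hdiff.symm, hIH', htop'.le]
    -- transfer from x₁ to x
    have hfinal : (A' + b) * (x₁ - K) / ((K:ℝ)+1) ≤ (A' + b) * (x - K) / ((K:ℝ)+1) := by
      apply div_le_div_of_nonneg_right _ hK1pos.le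
      apply mul_le_mul_of_nonneg_left (by linarith) (by linarith)
    calc T' + ((N.choose (K+1) : ℕ) : ℝ) ≤ (A' + b) * (x₁ - K) / ((K:ℝ)+1) := hstep
      _ ≤ (A' + b) * (x - K) / ((K:ℝ)+1) := hfinal

lemma pow_div_le_Bf (k : ℕ) (hk : 0 < k) {x : ℝ} (hx : (k:ℝ) ≤ x) :
    (x / k)^k ≤ Bf k x := by
  have hk0 : (0:ℝ) < (k:ℝ) := by exact_mod_cast hk
  have hfac : (∏ t ∈ range k, ((k:ℝ) - t)) = (k.factorial : ℝ) := by
    have h1 : ∀ t ∈ range k, ((k:ℝ) - t) = (((k - t : ℕ)) : ℝ) := by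
      intro t ht
      have := le_of_lt (mem_range.mp ht)
      push_cast [this]
      ring
    rw [Finset.prod_congr rfl h1, ← Nat.cast_prod, ← Nat.descFactorial_eq_prod_range,
      Nat.descFactorial_self]
  have hprod : (∏ t ∈ range k, (x / k) * ((k:ℝ) - t)) ≤ ∏ t ∈ range k, (x - t) := by
    apply Finset.prod_le_prod
    · intro t ht
      have h1 : (0:ℝ) ≤ (k:ℝ) - t := by
        have := mem_range.mp ht
        have : (t:ℝ) < k := by exact_mod_cast this
        linarith
      have hx0 : (0:ℝ) ≤ x / k := div_nonneg (by linarith) (by positivity)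
      exact mul_nonneg hx0 h1
    · intro t ht
      have h2 : (0:ℝ) ≤ (t:ℝ) := by positivity
      rw [div_mul_eq_mul_div, div_le_iff₀ hk0]
      nlinarith
  have heq : (∏ t ∈ range k, (x / k) * ((k:ℝ) - t)) = (x/k)^k * (k.factorial : ℝ) := by
    rw [Finset.prod_mul_distrib, Finset.prod_const, hfac, Finset.card_range]
  rw [Bf, le_div_iff₀ (by positivity : (0:ℝ) < (k.factorial : ℝ))]
  rw [heq] at hprod
  exact hprod

/-- For positive integers `a` and `k`, with `a = C(n_k,k) + ⋯ + C(n_j,j)` the `k`-th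
Macaulay representation of `a`, the `k`-th pseudopower
`a^⟨k⟩ = C(n_k+1, k+1) + ⋯ + C(n_j+1, j+1)` satisfies `a^⟨k⟩ ≤ a^((k+1)/k)`. -/
theorem stmt_4 (a k j : ℕ) (n : ℕ → ℕ) (ha : 0 < a) (hk : 0 < k)
    (hj : 1 ≤ j) (hjk : j ≤ k) (hnj : j ≤ n j)
    (hmono : ∀ i, j ≤ i → i < k → n i < n (i + 1))
    (hrep : a = ∑ i ∈ Finset.Icc j k, (n i).choose i) :
    ((∑ i ∈ Finset.Icc j k, (n i + 1).choose (i + 1) : ℕ) : ℝ)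
      ≤ (a : ℝ) ^ (((k : ℝ) + 1) / (k : ℝ)) := by
  have hsum : (∑ i ∈ Finset.Icc j k, ((n i).choose i : ℝ)) = (a:ℝ) := by
    rw [hrep]; push_cast; ring
  have hα1 : (1:ℝ) ≤ (a:ℝ) := by exact_mod_cast ha
  have hα0 : (0:ℝ) < (a:ℝ) := by linarith
  have hk0 : (0:ℝ) < (k:ℝ) := by exact_mod_cast hk
  set r : ℝ := (a:ℝ) ^ ((k:ℝ)⁻¹) with hrdef
  have hr1 : (1:ℝ) ≤ r := Real.one_le_rpow hα1 (by positivity)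
  have hrk : r ^ k = (a:ℝ) := by
    rw [hrdef, ← Real.rpow_natCast ((a:ℝ) ^ ((k:ℝ)⁻¹)) k,
      ← Real.rpow_mul (le_of_lt hα0), inv_mul_cancel₀ (ne_of_gt hk0), Real.rpow_one]
  have hxk : (k:ℝ) ≤ (k:ℝ) * r := by nlinarith
  have hkn : k ≤ n k := ni_ge j k n hnj hmono k hjk le_rfl
  have hCk : ((n k).choose k : ℝ) ≤ (a:ℝ) := by
    rw [← hsum]
    exact Finset.single_le_sum (f := fun i => ((n i).choose i : ℝ))
      (fun i _ => by positivity) (Finset.mem_Icc.mpr ⟨hjk, le_rfl⟩)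
  have hnkx : ((n k : ℕ) : ℝ) ≤ (k:ℝ) * r := by
    have h1 : ((n k : ℝ)/k)^k ≤ Bf k ((n k : ℕ) : ℝ) :=
      pow_div_le_Bf k hk (by exact_mod_cast hkn)
    rw [Bf_nat] at h1
    have h2 : ((n k : ℝ)/k)^k ≤ (a:ℝ) := le_trans h1 hCk
    have hu0 : (0:ℝ) ≤ (n k : ℝ)/k := by positivity
    have h3 : (((n k : ℝ)/k)^k) ^ ((k:ℝ)⁻¹) ≤ (a:ℝ) ^ ((k:ℝ)⁻¹) :=
      Real.rpow_le_rpow (by positivity) h2 (by positivity)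
    rw [Real.pow_rpow_inv_natCast hu0 (Nat.pos_iff_ne_zero.mp hk)] at h3
    rw [← hrdef] at h3
    calc ((n k : ℕ) : ℝ) = (k:ℝ) * ((n k : ℝ)/k) := by field_simp
      _ ≤ (k:ℝ) * r := by
          apply mul_le_mul_of_nonneg_left h3 hk0.le
  have hax : (a:ℝ) ≤ Bf k ((k:ℝ) * r) := by
    have := pow_div_le_Bf k hk hxk
    have hdiv : ((k:ℝ) * r) / k = r := by field_simp
    rw [hdiv, hrk] at this
    exact this
  have hmain := main_bound j n hj hnj k hjk hmono ((k:ℝ) * r) hnkx (by rw [hsum]; exact hax)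
  rw [hsum] at hmain
  -- split the pseudopower sum
  have hsplit : ((∑ i ∈ Finset.Icc j k, (n i + 1).choose (i + 1) : ℕ) : ℝ)
      = (∑ i ∈ Finset.Icc j k, ((n i).choose i : ℝ))
        + (∑ i ∈ Finset.Icc j k, ((n i).choose (i+1) : ℝ)) := by
    rw [← Finset.sum_add_distrib]
    push_cast
    refine Finset.sum_congr rfl fun i _ => ?_
    rw [Nat.choose_succ_succ]
    push_cast
    ring
  rw [hsplit, hsum]
  have hrpow : (a:ℝ) ^ (((k : ℝ) + 1) / (k : ℝ)) = (a:ℝ) * r := by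
    have he : ((k:ℝ)+1)/(k:ℝ) = 1 + (k:ℝ)⁻¹ := by field_simp
    rw [he, Real.rpow_add hα0, Real.rpow_one, hrdef]
  rw [hrpow]
  have hdiff : (a:ℝ) * r - ((a:ℝ) + (a:ℝ) * ((k:ℝ) * r - k) / ((k:ℝ)+1))
      = (a:ℝ) * (r - 1) / ((k:ℝ)+1) := by
    field_simp
    ring
  have hnn : (0:ℝ) ≤ (a:ℝ) * (r - 1) / ((k:ℝ)+1) := by
    apply div_nonneg _ (by positivity)
    nlinarith
  linarith [hmain, hdiff, hnn]
end

section
/- Fix a positive integer $k$. Then $a^{\langle k \rangle} \sim C_k \, a^{(k+1)/k}$ as $a \to \infty$, i.e. $\lim_{a \to \infty} a^{\langle k \rangle} / (C_k a^{(k+1)/k}) = 1$, where $C_k = (k!)^{1/k}/(k+1)$ and $a^{\langle k \rangle}$ is the $k$-th pseudopower of $a$. -/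
/-- The `k`-th pseudopower `a^⟨k⟩`, computed greedily from the `k`-th Macaulay
representation of `a`: `n_k` is the largest `q` with `C(q,k) ≤ a`, the term
`C(n_k+1, k+1)` is recorded, and one recurses on `a - C(n_k, k)` with `k-1`. -/
def pseudoPow : ℕ → ℕ → ℕ
  | 0, _ => 0
  | (k+1), a =>
    if a = 0 then 0 else
      let n := Nat.findGreatest (fun q => Nat.choose q (k+1) ≤ a) (a + k + 1)
      (n + 1).choose (k + 2) + pseudoPow k (a - n.choose (k+1))

lemma add_one_le_choose (m : ℕ) : ∀ j : ℕ, j + 1 ≤ (m + 1 + j).choose (m + 1)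
  | 0 => by simp
  | (j+1) => by
    have h := add_one_le_choose m j
    have h2 : 1 ≤ (m + 1 + j).choose m := Nat.choose_pos (by omega)
    have h3 := Nat.choose_succ_succ' (m+1+j) m
    have : m + 1 + (j+1) = (m+1+j) + 1 := by ring
    rw [this, h3]
    omega

lemma findGreatest_facts (k a : ℕ) (ha : 1 ≤ a) :
    k + 1 ≤ Nat.findGreatest (fun q => Nat.choose q (k+1) ≤ a) (a + k + 1) ∧
    (Nat.findGreatest (fun q => Nat.choose q (k+1) ≤ a) (a + k + 1)).choose (k+1) ≤ a ∧
    a < ((Nat.findGreatest (fun q => Nat.choose q (k+1) ≤ a) (a + k + 1)) + 1).choose (k+1) := by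
  have hPk : (k+1).choose (k+1) ≤ a := by simp [Nat.choose_self]; omega
  have h1 : k + 1 ≤ Nat.findGreatest (fun q => Nat.choose q (k+1) ≤ a) (a + k + 1) :=
    Nat.le_findGreatest (by omega) hPk
  have h2 : (Nat.findGreatest (fun q => Nat.choose q (k+1) ≤ a) (a + k + 1)).choose (k+1) ≤ a :=
    Nat.findGreatest_spec (P := fun q => Nat.choose q (k+1) ≤ a) (n := a + k + 1) (m := k+1) (by omega) hPk
  have hnotend : ¬ ((a + k + 1).choose (k+1) ≤ a) := by
    have := add_one_le_choose k a
    rw [show a + k + 1 = k + 1 + a by omega]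
    omega
  have h3 : Nat.findGreatest (fun q => Nat.choose q (k+1) ≤ a) (a + k + 1) ≠ a + k + 1 := by
    intro heq
    rw [heq] at h2
    exact hnotend h2
  have hle := Nat.findGreatest_le (P := fun q => Nat.choose q (k+1) ≤ a) (a + k + 1)
  have h4 : ¬ ((Nat.findGreatest (fun q => Nat.choose q (k+1) ≤ a) (a + k + 1) + 1).choose (k+1) ≤ a) :=
    Nat.findGreatest_is_greatest (P := fun q => Nat.choose q (k+1) ≤ a) (n := a + k + 1)
      (k := Nat.findGreatest (fun q => Nat.choose q (k+1) ≤ a) (a + k + 1) + 1) (by omega) (by omega)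
  exact ⟨h1, h2, by omega⟩

lemma pseudoPow_le : ∀ (k a m : ℕ), a < m.choose k → pseudoPow k a ≤ (m+1).choose (k+1)
  | 0, a, m, _ => by simp [pseudoPow]
  | (k+1), a, m, h => by
    show pseudoPow (k+1) a ≤ (m+1).choose (k+2)
    rcases Nat.eq_zero_or_pos a with rfl | ha
    · simp [pseudoPow]
    obtain ⟨h1, h2, h3⟩ := findGreatest_facts k a ha
    set N := Nat.findGreatest (fun q => Nat.choose q (k+1) ≤ a) (a + k + 1) with hN
    have hNm : N < m := by
      by_contra hc
      push_neg at hc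
      exact absurd (le_trans (Nat.choose_le_choose (k+1) hc) h2) (by omega)
    have hr : a - N.choose (k+1) < N.choose k := by
      have := Nat.choose_succ_succ' N k
      omega
    have hIH := pseudoPow_le k (a - N.choose (k+1)) N hr
    have hunfold : pseudoPow (k+1) a
        = (N + 1).choose (k + 2) + pseudoPow k (a - N.choose (k+1)) := by
      rw [pseudoPow, if_neg (by omega : ¬ a = 0)]
    rw [hunfold]
    have hp : (N + 2).choose (k + 2) = (N+1).choose (k+1) + (N + 1).choose (k + 2) :=
      Nat.choose_succ_succ' (N+1) (k+1)
    have hlast : (N + 2).choose (k + 2) ≤ (m + 1).choose (k + 2) :=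
      Nat.choose_le_choose _ (by omega)
    omega

lemma pseudoPow_ge (k a : ℕ) (ha : 1 ≤ a) :
    ((Nat.findGreatest (fun q => Nat.choose q (k+1) ≤ a) (a + k + 1)) + 1).choose (k+2)
      ≤ pseudoPow (k+1) a := by
  rw [pseudoPow, if_neg (by omega : ¬ a = 0)]
  exact Nat.le_add_right _ _


open Filter

lemma ratio_tendsto (c d : ℝ) :
    Tendsto (fun n : ℕ => ((n:ℝ) + c) / ((n:ℝ) + d)) atTop (nhds 1) := by
  have hden : Tendsto (fun n : ℕ => (n:ℝ) + d) atTop atTop :=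
    tendsto_atTop_add_const_right _ d tendsto_natCast_atTop_atTop
  have h0 : Tendsto (fun n : ℕ => (c - d) / ((n:ℝ) + d)) atTop (nhds 0) :=
    Tendsto.div_atTop tendsto_const_nhds hden
  have h1 : Tendsto (fun n : ℕ => 1 + (c - d) / ((n:ℝ) + d)) atTop (nhds 1) := by
    simpa using tendsto_const_nhds.add h0
  apply h1.congr'
  filter_upwards [hden.eventually_gt_atTop 0] with n hn
  field_simp
  ring

lemma prod_ratio_tendsto (K : ℕ) (c d : ℝ) :
    Tendsto (fun n : ℕ => ∏ i ∈ Finset.range K, (((n:ℝ) + (c - i)) / ((n:ℝ) + d)))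
      atTop (nhds 1) := by
  have h := tendsto_finset_prod (Finset.range K)
    (f := fun (i : ℕ) (n : ℕ) => ((n:ℝ) + (c - i)) / ((n:ℝ) + d))
    (a := fun _ => 1) (fun i _ => ratio_tendsto (c - i) d)
  simpa using h

lemma keyRpow (k : ℕ) (hk : 1 ≤ k) (x : ℝ) (hx : 0 ≤ x) :
    ((k.factorial : ℝ) ^ ((1:ℝ)/(k:ℝ)) / ((k:ℝ)+1)) * ((x^k / (k.factorial:ℝ)) ^ (((k:ℝ)+1)/(k:ℝ)))
      = x^(k+1) / ((k+1).factorial : ℝ) := by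
  have hk0 : (k:ℝ) ≠ 0 := Nat.cast_ne_zero.mpr (by omega)
  have hf : (0:ℝ) < (k.factorial : ℝ) := by exact_mod_cast k.factorial_pos
  have hxk : (0:ℝ) ≤ x^k := pow_nonneg hx k
  rw [Real.div_rpow hxk hf.le]
  have h1 : (x^k : ℝ) ^ (((k:ℝ)+1)/(k:ℝ)) = x ^ (k+1) := by
    rw [← Real.rpow_natCast x k, ← Real.rpow_mul hx, ← Real.rpow_natCast x (k+1)]
    congr 1
    push_cast
    field_simp
  have h2 : ((k.factorial:ℝ)) ^ (((k:ℝ)+1)/(k:ℝ))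
      = (k.factorial:ℝ) * (k.factorial:ℝ) ^ ((1:ℝ)/(k:ℝ)) := by
    rw [show ((k:ℝ)+1)/(k:ℝ) = 1 + 1/(k:ℝ) by field_simp, Real.rpow_add hf, Real.rpow_one]
  rw [h1, h2]
  have hg : (0:ℝ) < (k.factorial:ℝ) ^ ((1:ℝ)/(k:ℝ)) := Real.rpow_pos_of_pos hf _
  have hfac : (((k+1).factorial : ℝ)) = ((k:ℝ)+1) * (k.factorial:ℝ) := by
    push_cast [Nat.factorial_succ]; ring
  rw [hfac]
  have hk1 : (0:ℝ) < (k:ℝ) + 1 := by positivity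
  field_simp


open Filter

lemma ell_tendsto (m : ℕ) :
    Tendsto (fun n : ℕ => (((n+1).descFactorial (m+2) : ℕ) : ℝ) / ((n:ℝ)+1)^(m+2))
      atTop (nhds 1) := by
  apply (prod_ratio_tendsto (m+2) 1 1).congr'
  filter_upwards [eventually_ge_atTop (m+2)] with n hn
  rw [Nat.descFactorial_eq_prod_range, Nat.cast_prod,
    show ((n:ℝ)+1)^(m+2) = ∏ _i ∈ Finset.range (m+2), ((n:ℝ)+1) by
      rw [Finset.prod_const, Finset.card_range],
    ← Finset.prod_div_distrib]
  refine Finset.prod_congr rfl fun i hi => ?_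
  have hi' : i ≤ n + 1 := by have := Finset.mem_range.mp hi; omega
  rw [Nat.cast_sub hi']
  push_cast
  ring

lemma u_tendsto (m : ℕ) :
    Tendsto (fun n : ℕ => (((n+2).descFactorial (m+2) : ℕ) : ℝ) / ((n:ℝ)-(m:ℝ))^(m+2))
      atTop (nhds 1) := by
  apply (prod_ratio_tendsto (m+2) 2 (-(m:ℝ))).congr'
  filter_upwards [eventually_ge_atTop (m+2)] with n hn
  rw [Nat.descFactorial_eq_prod_range, Nat.cast_prod,
    show ((n:ℝ)-(m:ℝ))^(m+2) = ∏ _i ∈ Finset.range (m+2), ((n:ℝ)+ -(m:ℝ)) by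
      rw [Finset.prod_const, Finset.card_range]; ring,
    ← Finset.prod_div_distrib]
  refine Finset.prod_congr rfl fun i hi => ?_
  have hi' : i ≤ n + 2 := by have := Finset.mem_range.mp hi; omega
  rw [Nat.cast_sub hi']
  push_cast
  ring

lemma sandwich_real (m n a : ℕ) (ha : 1 ≤ a) (hn : m + 2 ≤ n)
    (f2 : n.choose (m+1) ≤ a) (f3 : a < (n+1).choose (m+1))
    (P : ℕ) (hP1 : (n+1).choose (m+2) ≤ P) (hP2 : P ≤ (n+2).choose (m+2)) :
    (((n+1).descFactorial (m+2) : ℕ) : ℝ) / ((n:ℝ)+1)^(m+2)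
        ≤ (P:ℝ) / (((((m+1) : ℕ).factorial : ℝ) ^ ((1:ℝ)/(((m+1) : ℕ):ℝ)) / ((((m+1) : ℕ):ℝ)+1))
            * (a:ℝ) ^ (((((m+1) : ℕ):ℝ)+1)/(((m+1) : ℕ):ℝ)))
    ∧ (P:ℝ) / (((((m+1) : ℕ).factorial : ℝ) ^ ((1:ℝ)/(((m+1) : ℕ):ℝ)) / ((((m+1) : ℕ):ℝ)+1))
            * (a:ℝ) ^ (((((m+1) : ℕ):ℝ)+1)/(((m+1) : ℕ):ℝ)))
        ≤ (((n+2).descFactorial (m+2) : ℕ) : ℝ) / ((n:ℝ)-(m:ℝ))^(m+2) := by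
  set C : ℝ := ((((m+1) : ℕ).factorial : ℝ) ^ ((1:ℝ)/(((m+1) : ℕ):ℝ)) / ((((m+1) : ℕ):ℝ)+1))
    with hCdef
  set e : ℝ := ((((m+1) : ℕ):ℝ)+1)/(((m+1) : ℕ):ℝ) with hedef
  have hFpos : (0:ℝ) < ((m+1).factorial : ℝ) := by exact_mod_cast (m+1).factorial_pos
  have hF2pos : (0:ℝ) < ((m+2).factorial : ℝ) := by exact_mod_cast (m+2).factorial_pos
  have hCpos : 0 < C := by rw [hCdef]; positivity
  have hepos : 0 < e := by rw [hedef]; positivity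
  have ha' : (0:ℝ) < (a:ℝ) := by exact_mod_cast ha
  have hgpos : 0 < C * (a:ℝ) ^ e := by positivity
  -- natural-number bounds on a
  have hub_nat : a * (m+1).factorial ≤ (n+1)^(m+1) :=
    calc a * (m+1).factorial ≤ (n+1).choose (m+1) * (m+1).factorial :=
          Nat.mul_le_mul_right _ (by omega)
      _ = (n+1).descFactorial (m+1) := by
          rw [Nat.descFactorial_eq_factorial_mul_choose]; ring
      _ ≤ (n+1)^(m+1) := Nat.descFactorial_le_pow _ _
  have hlb_nat : (n - m)^(m+1) ≤ (m+1).factorial * a :=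
    calc (n - m)^(m+1) = (n+1-(m+1))^(m+1) := by congr 1; omega
      _ ≤ n.descFactorial (m+1) := Nat.pow_sub_le_descFactorial n (m+1)
      _ = (m+1).factorial * n.choose (m+1) := Nat.descFactorial_eq_factorial_mul_choose n (m+1)
      _ ≤ (m+1).factorial * a := Nat.mul_le_mul_left _ f2
  have hnm : ((n:ℝ) - (m:ℝ)) = ((n - m : ℕ) : ℝ) := by
    rw [Nat.cast_sub (by omega)]
  have hnmpos : (0:ℝ) < (n:ℝ) - (m:ℝ) := by
    rw [hnm]; exact_mod_cast (by omega : 0 < n - m)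
  have haub : (a:ℝ) ≤ ((n:ℝ)+1)^(m+1) / ((m+1).factorial : ℝ) := by
    rw [le_div_iff₀ hFpos]
    exact_mod_cast hub_nat
  have halb : ((n:ℝ)-(m:ℝ))^(m+1) / ((m+1).factorial : ℝ) ≤ (a:ℝ) := by
    rw [div_le_iff₀ hFpos, hnm, mul_comm]
    exact_mod_cast hlb_nat
  -- rpow bounds on the denominator
  have hgub : C * (a:ℝ) ^ e ≤ ((n:ℝ)+1)^(m+2) / ((m+2).factorial : ℝ) := by
    have hkey := keyRpow (m+1) (by omega) ((n:ℝ)+1) (by positivity)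
    calc C * (a:ℝ) ^ e
        ≤ C * ((((n:ℝ)+1)^(m+1) / ((m+1).factorial : ℝ)) ^ e) :=
          mul_le_mul_of_nonneg_left
            (Real.rpow_le_rpow ha'.le haub hepos.le) hCpos.le
      _ = ((n:ℝ)+1)^(m+2) / ((m+2).factorial : ℝ) := hkey
  have hglb : ((n:ℝ)-(m:ℝ))^(m+2) / ((m+2).factorial : ℝ) ≤ C * (a:ℝ) ^ e := by
    have hkey := keyRpow (m+1) (by omega) ((n:ℝ)-(m:ℝ)) hnmpos.le
    calc ((n:ℝ)-(m:ℝ))^(m+2) / ((m+2).factorial : ℝ)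
        = C * ((((n:ℝ)-(m:ℝ))^(m+1) / ((m+1).factorial : ℝ)) ^ e) := hkey.symm
      _ ≤ C * (a:ℝ) ^ e :=
          mul_le_mul_of_nonneg_left
            (Real.rpow_le_rpow (by positivity) halb hepos.le) hCpos.le
  have hP1' : (((n+1).choose (m+2) : ℕ) : ℝ) ≤ (P:ℝ) := by exact_mod_cast hP1
  have hP2' : (P:ℝ) ≤ (((n+2).choose (m+2) : ℕ) : ℝ) := by exact_mod_cast hP2
  constructor
  · rw [le_div_iff₀ hgpos]
    calc (((n+1).descFactorial (m+2) : ℕ) : ℝ) / ((n:ℝ)+1)^(m+2) * (C * (a:ℝ) ^ e)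
        ≤ (((n+1).descFactorial (m+2) : ℕ) : ℝ) / ((n:ℝ)+1)^(m+2)
            * (((n:ℝ)+1)^(m+2) / ((m+2).factorial : ℝ)) :=
          mul_le_mul_of_nonneg_left hgub (by positivity)
      _ = (((n+1).choose (m+2) : ℕ) : ℝ) := by
          rw [Nat.descFactorial_eq_factorial_mul_choose]
          push_cast
          have h1 : ((n:ℝ)+1)^(m+2) ≠ 0 := by positivity
          field_simp
      _ ≤ (P:ℝ) := hP1'
  · have hstep := div_le_div₀ (by positivity)
      (show (P:ℝ) ≤ (((n+2).descFactorial (m+2) : ℕ) : ℝ) / ((m+2).factorial : ℝ) by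
        rw [le_div_iff₀ hF2pos, Nat.descFactorial_eq_factorial_mul_choose]
        push_cast
        nlinarith [hP2'])
      (show (0:ℝ) < ((n:ℝ)-(m:ℝ))^(m+2) / ((m+2).factorial : ℝ) by positivity)
      hglb
    calc (P:ℝ) / (C * (a:ℝ) ^ e)
        ≤ ((((n+2).descFactorial (m+2) : ℕ) : ℝ) / ((m+2).factorial : ℝ))
            / (((n:ℝ)-(m:ℝ))^(m+2) / ((m+2).factorial : ℝ)) := hstep
      _ = (((n+2).descFactorial (m+2) : ℕ) : ℝ) / ((n:ℝ)-(m:ℝ))^(m+2) := by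
          have hB : ((n:ℝ)-(m:ℝ))^(m+2) ≠ 0 := by positivity
          field_simp

/-- For fixed `k ≥ 1`, `a^⟨k⟩ ~ C_k a^((k+1)/k)` as `a → ∞`, where
`C_k = (k!)^(1/k)/(k+1)`. -/
theorem stmt_6 (k : ℕ) (hk : 1 ≤ k) :
    Filter.Tendsto
      (fun a : ℕ => (pseudoPow k a : ℝ) /
        (((k.factorial : ℝ) ^ ((1 : ℝ) / (k : ℝ)) / ((k : ℝ) + 1)) *
          (a : ℝ) ^ (((k : ℝ) + 1) / (k : ℝ))))
      Filter.atTop (nhds 1) := by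
  obtain ⟨m, rfl⟩ : ∃ m, k = m + 1 := ⟨k - 1, by omega⟩
  set N : ℕ → ℕ := fun a => Nat.findGreatest (fun q => Nat.choose q (m+1) ≤ a) (a + m + 1)
    with hNdef
  set C : ℝ := (((m+1 : ℕ).factorial : ℝ) ^ ((1 : ℝ) / ((m+1 : ℕ) : ℝ)) / (((m+1 : ℕ) : ℝ) + 1))
    with hCdef
  set e : ℝ := (((m+1 : ℕ) : ℝ) + 1) / ((m+1 : ℕ) : ℝ) with hedef
  have hm1 : (0:ℝ) < ((m+1 : ℕ) : ℝ) := by positivity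
  have hFpos : (0:ℝ) < ((m+1).factorial : ℝ) := by exact_mod_cast (m+1).factorial_pos
  have hF2pos : (0:ℝ) < ((m+2).factorial : ℝ) := by exact_mod_cast (m+2).factorial_pos
  have hCpos : 0 < C := by rw [hCdef]; positivity
  have hepos : 0 < e := by rw [hedef]; positivity
  have hNtop : Tendsto N atTop atTop := by
    rw [tendsto_atTop_atTop]
    intro b
    refine ⟨max (b.choose (m+1)) b, fun a ha => ?_⟩
    have h1 : b.choose (m+1) ≤ a := le_trans (le_max_left _ _) ha
    have h2 : b ≤ a := le_trans (le_max_right _ _) ha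
    exact Nat.le_findGreatest (by omega) h1
  have hl2 : Tendsto (fun a : ℕ => (((N a + 1).descFactorial (m+2) : ℕ) : ℝ)
      / (((N a):ℝ)+1)^(m+2)) atTop (nhds 1) := by
    exact (ell_tendsto m).comp hNtop
  have hu2 : Tendsto (fun a : ℕ => (((N a + 2).descFactorial (m+2) : ℕ) : ℝ)
      / (((N a):ℝ)-(m:ℝ))^(m+2)) atTop (nhds 1) := by
    exact (u_tendsto m).comp hNtop
  refine tendsto_of_tendsto_of_tendsto_of_le_of_le' hl2 hu2 ?_ ?_ <;>
    filter_upwards [eventually_ge_atTop 1, hNtop.eventually (eventually_ge_atTop (m+2))]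
      with a ha hNa
  · obtain ⟨f1, f2, f3⟩ := findGreatest_facts m a ha
    have hP1 : (N a + 1).choose (m+2) ≤ pseudoPow (m+1) a := pseudoPow_ge m a ha
    have hP2 : pseudoPow (m+1) a ≤ (N a + 2).choose (m+2) :=
      pseudoPow_le (m+1) a (N a + 1) f3
    exact (sandwich_real m (N a) a ha hNa f2 f3 _ hP1 hP2).1
  · obtain ⟨f1, f2, f3⟩ := findGreatest_facts m a ha
    have hP1 : (N a + 1).choose (m+2) ≤ pseudoPow (m+1) a := pseudoPow_ge m a ha
    have hP2 : pseudoPow (m+1) a ≤ (N a + 2).choose (m+2) :=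
      pseudoPow_le (m+1) a (N a + 1) f3
    exact (sandwich_real m (N a) a ha hNa f2 f3 _ hP1 hP2).2
end

section
/- For a positive integer $a$, a positive integer $k$, and a positive rational $\beta$ such that $\beta a$ is always an integer along the sequence considered, one has $(\beta a)^{\langle k \rangle} \sim \beta^{(k+1)/k} a^{\langle k \rangle}$ as $a \to \infty$, i.e. $\lim_{a \to \infty} (\beta a)^{\langle k \rangle} / (\beta^{(k+1)/k} a^{\langle k \rangle}) = 1$. -/
namespace PseudoAux

/-- the greedy index used in `pseudoPow (k+1) a` -/
def nA (k a : ℕ) : ℕ := Nat.findGreatest (fun q => Nat.choose q (k+1) ≤ a) (a + k + 1)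

lemma pseudoPow_succ (k a : ℕ) (ha : a ≠ 0) :
    pseudoPow (k+1) a = (nA k a + 1).choose (k+2) + pseudoPow k (a - (nA k a).choose (k+1)) := by
  rw [pseudoPow]
  simp [ha, nA]

lemma choose_add_lower (k a : ℕ) : a + 1 ≤ (a + (k+1)).choose (k+1) := by
  induction a with
  | zero => simp
  | succ a ih =>
    have h : a + 1 + (k + 1) = (a + (k+1)) + 1 := by ring
    have hcc : ((a + (k+1)) + 1).choose (k+1)
        = (a + (k+1)).choose k + (a + (k+1)).choose (k+1) := by
      simpa using Nat.choose_succ_succ (a + (k+1)) k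
    have hpos := Nat.choose_pos (show k ≤ a + (k+1) by omega)
    rw [h, hcc]
    omega

lemma nA_spec {k a : ℕ} (ha : 0 < a) : (nA k a).choose (k+1) ≤ a :=
  Nat.findGreatest_spec (P := fun q => Nat.choose q (k+1) ≤ a) (m := k+1) (by omega)
    (by simp [Nat.choose_self]; omega)

lemma nA_ge {k a : ℕ} (ha : 0 < a) : k + 1 ≤ nA k a :=
  Nat.le_findGreatest (P := fun q => Nat.choose q (k+1) ≤ a) (by omega)
    (by simp [Nat.choose_self]; omega)

lemma nA_lt {k a : ℕ} (ha : 0 < a) : a < (nA k a + 1).choose (k+1) := by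
  by_contra h
  push_neg at h
  rcases lt_or_ge (nA k a) (a + k + 1) with hlt | hge
  · exact Nat.findGreatest_is_greatest (P := fun q => Nat.choose q (k+1) ≤ a)
      (Nat.lt_succ_self _) (by unfold nA at hlt; omega) h
  · have hle : nA k a ≤ a + k + 1 := by unfold nA; exact Nat.findGreatest_le _
    have heq : nA k a = a + k + 1 := le_antisymm hle hge
    have hlow := choose_add_lower k (a + 1)
    have h2 : a + 1 + (k + 1) = nA k a + 1 := by omega
    rw [h2] at hlow
    omega

lemma pseudoPow_upper : ∀ (j b m : ℕ), b < m.choose j → pseudoPow j b < (m+1).choose (j+1) := by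
  intro j
  induction j with
  | zero =>
    intro b m h
    simpa [pseudoPow] using Nat.succ_pos m
  | succ j ih =>
    intro b m h
    by_cases hb : b = 0
    · subst hb
      have hm : j + 1 ≤ m := by
        by_contra hm
        push_neg at hm
        rw [Nat.choose_eq_zero_of_lt hm] at h
        omega
      simpa [pseudoPow] using Nat.choose_pos (show j + 2 ≤ m + 1 by omega)
    · have hb0 : 0 < b := Nat.pos_of_ne_zero hb
      rw [pseudoPow_succ j b hb]
      set n := nA j b with hn
      have hc1 : n.choose (j+1) ≤ b := nA_spec hb0
      have hc2 : b < (n+1).choose (j+1) := nA_lt hb0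
      have hnm : n < m := by
        by_contra hnm
        push_neg at hnm
        have := Nat.choose_le_choose (j+1) hnm
        omega
      have hcc : (n+1).choose (j+1) = n.choose j + n.choose (j+1) := by
        simpa using Nat.choose_succ_succ n j
      have hr : b - n.choose (j+1) < n.choose j := by omega
      have hih := ih _ n hr
      have hsum : (n+2).choose (j+2) = (n+1).choose (j+1) + (n+1).choose (j+2) := by
        simpa using Nat.choose_succ_succ (n+1) (j+1)
      have hmono : (n+2).choose (j+2) ≤ (m+1).choose (j+2) :=
        Nat.choose_le_choose _ (by omega)
      have hfix : (m+1).choose (j+1+1) = (m+1).choose (j+2) := rfl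
      omega

lemma pseudoPow_lower {k a : ℕ} (ha : 0 < a) :
    (nA k a + 1).choose (k+2) ≤ pseudoPow (k+1) a := by
  rw [pseudoPow_succ k a ha.ne']
  exact Nat.le_add_right _ _

lemma pseudoPow_pos {k a : ℕ} (ha : 0 < a) : 0 < pseudoPow (k+1) a := by
  have h1 := pseudoPow_lower (k := k) ha
  have h2 := Nat.choose_pos (show k + 2 ≤ nA k a + 1 by have := nA_ge (k := k) ha; omega)
  omega

end PseudoAux
open Filter Finset

lemma tendsto_fac (K j : ℕ) :
    Tendsto (fun n : ℕ => ((n + j).choose K : ℝ) / (n : ℝ) ^ K) atTop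
      (nhds (1 / K.factorial)) := by
  have hfac : Tendsto (fun n : ℕ =>
      (1 / (K.factorial : ℝ)) * ∏ i ∈ range K, (((n + j - i : ℕ) : ℝ) / (n : ℝ)))
      atTop (nhds ((1 / (K.factorial : ℝ)) * ∏ _i ∈ range K, (1:ℝ))) := by
    refine Tendsto.const_mul _ (tendsto_finset_prod _ fun i hi => ?_)
    have h0 : Tendsto (fun n : ℕ => 1 + ((j : ℝ) - (i : ℝ)) / (n : ℝ)) atTop
        (nhds (1 + 0)) :=
      tendsto_const_nhds.add (tendsto_const_div_atTop_nhds_zero_nat _)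
    rw [add_zero] at h0
    refine h0.congr' ?_
    have hiK : i < K := mem_range.mp hi
    filter_upwards [eventually_ge_atTop K] with n hn
    have hn1 : 1 ≤ n := by omega
    have hin : i ≤ n + j := by omega
    have hcast : ((n + j - i : ℕ) : ℝ) = (n : ℝ) + (j : ℝ) - (i : ℝ) := by
      push_cast [hin]
      ring
    rw [hcast]
    have hn0 : (n : ℝ) ≠ 0 := by positivity
    field_simp
    ring
  rw [Finset.prod_const_one, mul_one] at hfac
  refine hfac.congr' ?_
  filter_upwards [eventually_ge_atTop 1] with n hn
  have hn0 : (n : ℝ) ≠ 0 := by positivity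
  have hdesc : ((n + j).descFactorial K : ℝ) = (K.factorial : ℝ) * ((n + j).choose K : ℝ) := by
    exact_mod_cast congrArg (Nat.cast : ℕ → ℝ) (Nat.descFactorial_eq_factorial_mul_choose (n+j) K)
  have hprod : ((n + j).descFactorial K : ℝ) = ∏ i ∈ range K, ((n + j - i : ℕ) : ℝ) := by
    rw [Nat.descFactorial_eq_prod_range]
    push_cast
    rfl
  rw [Finset.prod_div_distrib, Finset.prod_const, ← hprod, hdesc]
  have hK0 : (K.factorial : ℝ) ≠ 0 := by positivity
  field_simp
  rw [Finset.card_range]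

lemma tendsto_ratio (k j1 j2 : ℕ) (hk : 0 < k) :
    Tendsto (fun n : ℕ => ((n + j1).choose (k+1) : ℝ) /
        (((n + j2).choose k : ℝ) ^ (((k:ℝ)+1)/(k:ℝ)))) atTop
      (nhds ((k.factorial : ℝ) ^ (((k:ℝ)+1)/(k:ℝ)) / ((k+1).factorial : ℝ))) := by
  set e : ℝ := ((k:ℝ)+1)/(k:ℝ) with he
  have hk0 : (k:ℝ) ≠ 0 := Nat.cast_ne_zero.mpr hk.ne'
  have he0 : (0:ℝ) ≤ e := by positivity
  have h1 := tendsto_fac (k+1) j1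
  have h2 := (tendsto_fac k j2).rpow_const (p := e) (Or.inr he0)
  have hne : ((1 / (k.factorial:ℝ)) ^ e) ≠ 0 :=
    (Real.rpow_pos_of_pos (by positivity) _).ne'
  have h3 := h1.div h2 hne
  have hval : (1 / (((k+1).factorial : ℕ) : ℝ)) / ((1 / (k.factorial:ℝ)) ^ e)
      = (k.factorial : ℝ) ^ e / (((k+1).factorial : ℕ) : ℝ) := by
    rw [one_div (k.factorial:ℝ), Real.inv_rpow (by positivity)]
    have hrp : (0:ℝ) < (k.factorial : ℝ) ^ e := Real.rpow_pos_of_pos (by positivity) _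
    have hf : (0:ℝ) < (((k+1).factorial : ℕ) : ℝ) := by positivity
    field_simp
  rw [hval] at h3
  refine h3.congr' ?_
  filter_upwards [eventually_ge_atTop (k + 1)] with n hn
  have hn0 : (0:ℝ) < (n:ℝ) := by
    have : 0 < n := by omega
    exact_mod_cast this
  have hcpos : (0:ℝ) < ((n + j2).choose k : ℝ) := by
    exact_mod_cast Nat.choose_pos (show k ≤ n + j2 by omega)
  have hpow : ((n:ℝ) ^ k) ^ e = (n:ℝ) ^ (k+1) := by
    rw [← Real.rpow_natCast (n:ℝ) k, ← Real.rpow_mul hn0.le]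
    have hke : (k:ℝ) * e = ((k+1 : ℕ) : ℝ) := by
      rw [he]
      push_cast
      field_simp
    rw [hke, Real.rpow_natCast]
  show ((n + j1).choose (k+1) : ℝ) / (n : ℝ) ^ (k+1) /
      ((((n + j2).choose k : ℝ) / (n : ℝ) ^ k) ^ e)
    = ((n + j1).choose (k+1) : ℝ) / (((n + j2).choose k : ℝ) ^ e)
  rw [Real.div_rpow hcpos.le (by positivity), hpow]
  have hcne : ((n + j2).choose k : ℝ) ^ e ≠ 0 := (Real.rpow_pos_of_pos hcpos e).ne'
  have hnne : (n:ℝ) ^ (k+1) ≠ 0 := by positivity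
  field_simp

lemma key_s18 (k : ℕ) (hk : 0 < k) :
    Tendsto (fun a : ℕ => (pseudoPow k a : ℝ) / (a:ℝ) ^ (((k:ℝ)+1)/(k:ℝ))) atTop
      (nhds ((k.factorial : ℝ) ^ (((k:ℝ)+1)/(k:ℝ)) / ((k+1).factorial : ℝ))) := by
  obtain ⟨K, rfl⟩ : ∃ K, k = K + 1 := ⟨k-1, by omega⟩
  set e : ℝ := ((↑(K+1):ℝ)+1)/(↑(K+1):ℝ) with he
  have he0 : (0:ℝ) ≤ e := by positivity
  have hnA : Tendsto (fun a : ℕ => PseudoAux.nA K a) atTop atTop := by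
    rw [tendsto_atTop]
    intro N
    filter_upwards [eventually_ge_atTop ((N+1)^(K+1))] with a ha
    have ha0 : 0 < a := lt_of_lt_of_le (Nat.pow_pos (Nat.succ_pos N)) ha
    by_contra h
    push_neg at h
    have h1 : a < (PseudoAux.nA K a + 1).choose (K+1) := PseudoAux.nA_lt ha0
    have h2 : (PseudoAux.nA K a + 1).choose (K+1) ≤ (PseudoAux.nA K a + 1)^(K+1) :=
      Nat.choose_le_pow _ _
    have h3 : (PseudoAux.nA K a + 1)^(K+1) ≤ (N+1)^(K+1) :=
      Nat.pow_le_pow_left (by omega) _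
    omega
  have hL := (tendsto_ratio (K+1) 1 1 (Nat.succ_pos K)).comp hnA
  have hU := (tendsto_ratio (K+1) 2 0 (Nat.succ_pos K)).comp hnA
  refine tendsto_of_tendsto_of_tendsto_of_le_of_le' hL hU ?_ ?_
  · filter_upwards [eventually_ge_atTop 1] with a ha
    have ha0 : 0 < a := ha
    have hs := PseudoAux.nA_spec (k := K) ha0
    have hlt := PseudoAux.nA_lt (k := K) ha0
    have hg := PseudoAux.nA_ge (k := K) ha0
    set n := PseudoAux.nA K a with hn
    show ((n + 1).choose (K+1+1) : ℝ) / (((n + 1).choose (K+1) : ℝ)) ^ e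
        ≤ (pseudoPow (K+1) a : ℝ) / (a:ℝ) ^ e
    refine div_le_div₀ (by positivity) ?_ ?_ ?_
    · exact_mod_cast PseudoAux.pseudoPow_lower ha0
    · exact Real.rpow_pos_of_pos (by exact_mod_cast ha0) _
    · exact Real.rpow_le_rpow (by positivity) (by exact_mod_cast hlt.le) he0
  · filter_upwards [eventually_ge_atTop 1] with a ha
    have ha0 : 0 < a := ha
    have hs := PseudoAux.nA_spec (k := K) ha0
    have hlt := PseudoAux.nA_lt (k := K) ha0
    have hg := PseudoAux.nA_ge (k := K) ha0
    set n := PseudoAux.nA K a with hn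
    show (pseudoPow (K+1) a : ℝ) / (a:ℝ) ^ e
        ≤ ((n + 2).choose (K+1+1) : ℝ) / (((n + 0).choose (K+1) : ℝ)) ^ e
    have hcpos : 0 < (n + 0).choose (K+1) := Nat.choose_pos (by omega)
    refine div_le_div₀ (by positivity) ?_ ?_ ?_
    · have := PseudoAux.pseudoPow_upper (K+1) a (n+1) hlt
      exact_mod_cast this.le
    · exact Real.rpow_pos_of_pos (by exact_mod_cast hcpos) _
    · refine Real.rpow_le_rpow (by positivity) ?_ he0
      have : (n + 0).choose (K+1) ≤ a := by simpa using hs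
      exact_mod_cast this

/-- For a fixed positive integer `k` and a positive rational `β`, one has
`(βa)^⟨k⟩ ~ β^((k+1)/k) a^⟨k⟩` as `a → ∞` along the positive integers `a`
for which `βa` is an integer. -/
theorem stmt_18 (k : ℕ) (hk : 0 < k) (β : ℚ) (hβ : 0 < β) :
    Filter.Tendsto
      (fun a : ℕ => (pseudoPow k ((β * (a : ℚ)).num.toNat) : ℝ) /
        ((β : ℝ) ^ (((k : ℝ) + 1) / (k : ℝ)) * (pseudoPow k a : ℝ)))
      (Filter.atTop ⊓ Filter.principal {a : ℕ | (β * (a : ℚ)).den = 1})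
      (nhds 1) := by
  set e : ℝ := ((k:ℝ)+1)/(k:ℝ) with he
  set S : Set ℕ := {a : ℕ | (β * (a : ℚ)).den = 1} with hSdef
  set l : Filter ℕ := Filter.atTop ⊓ Filter.principal S with hl
  set m : ℕ → ℕ := fun a => (β * (a:ℚ)).num.toNat with hm
  have hβR : (0:ℝ) < (β:ℝ) := by exact_mod_cast hβ
  have hcast : ∀ a : ℕ, a ∈ S → ((m a : ℕ) : ℝ) = (β:ℝ) * a := by
    intro a haS
    have hq0 : (0:ℚ) ≤ β * a := by positivity
    have hnum : 0 ≤ (β * (a:ℚ)).num := Rat.num_nonneg.mpr hq0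
    have h1 : (((β * (a:ℚ)).num : ℤ) : ℚ) = β * a := (Rat.den_eq_one_iff _).mp haS
    have h2 : ((m a : ℕ) : ℝ) = (((β * (a:ℚ)).num : ℤ) : ℝ) := by
      exact_mod_cast congrArg (Int.cast : ℤ → ℝ) (Int.toNat_of_nonneg hnum)
    rw [h2]
    have h3 := congrArg (fun q : ℚ => (q : ℝ)) h1
    push_cast at h3
    exact h3
  have hS_ev : ∀ᶠ a in l, a ∈ S := by
    rw [hl]
    exact Filter.eventually_inf_principal.mpr (Filter.Eventually.of_forall fun a ha => ha)
  have h_ge : ∀ᶠ a in l, 1 ≤ a := (eventually_ge_atTop 1).filter_mono inf_le_left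
  have hmT : Tendsto m l atTop := by
    rw [← tendsto_natCast_atTop_iff (R := ℝ)]
    have h0 : Tendsto (fun a : ℕ => (β:ℝ) * a) l atTop :=
      (tendsto_natCast_atTop_atTop.const_mul_atTop hβR).mono_left inf_le_left
    refine h0.congr' ?_
    filter_upwards [hS_ev] with a haS
    exact (hcast a haS).symm
  have hkey := key_s18 k hk
  set C : ℝ := (k.factorial : ℝ) ^ e / ((k+1).factorial : ℝ) with hC
  have hC0 : C ≠ 0 := by
    have : (0:ℝ) < C := div_pos (Real.rpow_pos_of_pos (by positivity) _) (by positivity)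
    exact this.ne'
  have h1 : Tendsto (fun a : ℕ => (pseudoPow k (m a) : ℝ) / ((m a : ℕ):ℝ) ^ e) l (nhds C) :=
    hkey.comp hmT
  have h2 : Tendsto (fun a : ℕ => (pseudoPow k a : ℝ) / (a:ℝ) ^ e) l (nhds C) :=
    hkey.mono_left inf_le_left
  have h3 := h1.div h2 hC0
  rw [div_self hC0] at h3
  refine h3.congr' ?_
  filter_upwards [hS_ev, h_ge] with a haS ha1
  have hc := hcast a haS
  have ha0R : (0:ℝ) < (a:ℝ) := by exact_mod_cast (show 0 < a by omega)
  have hx : (0:ℝ) < (a:ℝ) ^ e := Real.rpow_pos_of_pos ha0R _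
  have hma : ((m a : ℕ) : ℝ) ^ e = (β:ℝ)^e * (a:ℝ)^e := by
    rw [hc, Real.mul_rpow hβR.le ha0R.le]
  obtain ⟨K, rfl⟩ : ∃ K, k = K + 1 := ⟨k-1, by omega⟩
  have hq : (0:ℝ) < (pseudoPow (K+1) a : ℝ) := by
    exact_mod_cast PseudoAux.pseudoPow_pos (show 0 < a by omega)
  show (pseudoPow (K+1) (m a) : ℝ) / ((m a : ℕ):ℝ) ^ e /
      ((pseudoPow (K+1) a : ℝ) / (a:ℝ) ^ e)
    = (pseudoPow (K+1) (m a) : ℝ) / ((β : ℝ) ^ e * (pseudoPow (K+1) a : ℝ))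
  rw [hma]
  have hb : ((β:ℝ)) ^ e ≠ 0 := (Real.rpow_pos_of_pos hβR _).ne'
  field_simp
end

section
/- Let $h(t) = \sum_{k=0}^d h_k t^k$ be a reciprocal polynomial of even degree $d$ (so $h_k = h_{d-k}$), and let $\gamma(t)$ be its gamma polynomial, i.e. the unique polynomial with $h(t) = \sum_{i=0}^{d/2} \gamma_i t^i (1+t)^{d-2i}$. Then $\gamma(u) = u^{d/2} g(1/u - 2)$ where $g(u) = h_{d/2} + 2\sum_{j=1}^{d/2} h_{d/2 - j} T_j(u/2)$ and $T_j$ is the $j$-th Chebyshev polynomial of the first kind. -/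
open Finset Polynomial

private lemma cheb_eval19 (t : ℝ) (ht : t ≠ 0) : ∀ j : ℕ,
    (Polynomial.Chebyshev.T ℝ (j : ℤ)).eval ((t + t⁻¹) / 2) = (t ^ j + t⁻¹ ^ j) / 2 := by
  intro j
  induction j using Nat.twoStepInduction with
  | zero => simp
  | one => simp
  | more j ih1 ih2 =>
    have h2 : ((j + 2 : ℕ) : ℤ) = (j : ℤ) + 2 := by push_cast; ring
    have h1 : ((j + 1 : ℕ) : ℤ) = (j : ℤ) + 1 := by push_cast; ring
    rw [h2, Polynomial.Chebyshev.T_add_two]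
    rw [h1] at ih2
    simp only [eval_sub, eval_mul, eval_ofNat, eval_X]
    rw [ih1, ih2]
    field_simp
    have htt : t * t⁻¹ = 1 := mul_inv_cancel₀ ht
    linear_combination (t * t⁻¹ ^ j - t⁻¹ * t⁻¹ ^ j) * htt

/-- Let `h(t) = ∑_{k=0}^d h_k t^k` be a reciprocal polynomial of even degree `d`
(`h_k = h_{d-k}`), and let `γ` be its gamma polynomial, i.e.
`h(t) = ∑_{i=0}^{d/2} γ_i t^i (1+t)^{d-2i}`.  Then for `u ≠ 0`,
`γ(u) = u^{d/2} g(1/u - 2)` where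
`g(v) = h_{d/2} + 2 ∑_{j=1}^{d/2} h_{d/2-j} T_j(v/2)` and `T_j` is the `j`-th
Chebyshev polynomial of the first kind. -/
theorem stmt_19 (d : ℕ) (hd : 0 < d) (hde : Even d) (h γ : ℕ → ℝ)
    (hrec : ∀ k ≤ d, h k = h (d - k))
    (hγ : ∀ t : ℝ, ∑ k ∈ Finset.range (d + 1), h k * t ^ k
      = ∑ i ∈ Finset.range (d / 2 + 1), γ i * t ^ i * (1 + t) ^ (d - 2 * i)) :
    ∀ u : ℝ, u ≠ 0 →
      ∑ i ∈ Finset.range (d / 2 + 1), γ i * u ^ i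
        = u ^ (d / 2) *
          (h (d / 2) + 2 * ∑ j ∈ Finset.Icc 1 (d / 2),
            h (d / 2 - j) * (Polynomial.Chebyshev.T ℝ (j : ℤ)).eval ((1 / u - 2) / 2)) := by
  obtain ⟨m, hm⟩ := hde
  have hd2 : d / 2 = m := by omega
  have hm1 : 1 ≤ m := by omega
  rw [hd2] at hγ ⊢
  -- the two polynomials
  set P : Polynomial ℝ := ∑ i ∈ range (m + 1), C (γ i) * X ^ (m - i) with hP
  set Q : Polynomial ℝ := C (h m) + ∑ j ∈ Icc 1 m,
      C (2 * h (m - j)) * ((Polynomial.Chebyshev.T ℝ (j : ℤ)).comp (C (2⁻¹ : ℝ) * (X - 2)))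
      with hQ
  have hPe : ∀ x : ℝ, P.eval x = ∑ i ∈ range (m + 1), γ i * x ^ (m - i) := by
    intro x
    simp [hP, eval_finset_sum]
  have hQe : ∀ x : ℝ, Q.eval x = h m + ∑ j ∈ Icc 1 m,
      2 * h (m - j) * (Polynomial.Chebyshev.T ℝ (j : ℤ)).eval (2⁻¹ * (x - 2)) := by
    intro x
    simp [hQ, eval_finset_sum, eval_comp]
  -- the h side rewrite
  have hside : ∀ t : ℝ, t ≠ 0 → ∑ k ∈ range (d + 1), h k * t ^ k
      = t ^ m * (h m + ∑ j ∈ Icc 1 m, h (m - j) * (t ^ j + t⁻¹ ^ j)) := by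
    intro t ht
    have split : ∑ k ∈ Ico 0 (m + 1), h k * t ^ k + ∑ k ∈ Ico (m + 1) (d + 1), h k * t ^ k
        = ∑ k ∈ Ico 0 (d + 1), h k * t ^ k :=
      Finset.sum_Ico_consecutive _ (by omega) (by omega)
    rw [range_eq_Ico, ← split]
    have e1 : ∑ k ∈ Ico 0 (m + 1), h k * t ^ k
        = h m * t ^ m + ∑ i ∈ range m, h (m - (i + 1)) * t ^ (m - (i + 1)) := by
      rw [← range_eq_Ico, ← Finset.sum_range_reflect]
      rw [Finset.sum_range_succ']
      simp only [Nat.add_sub_cancel]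
      rw [add_comm]
      simp
    have e2 : ∑ k ∈ Ico (m + 1) (d + 1), h k * t ^ k
        = ∑ i ∈ range m, h (m - (i + 1)) * t ^ (m + 1 + i) := by
      rw [Finset.sum_Ico_eq_sum_range]
      have : d + 1 - (m + 1) = m := by omega
      rw [this]
      apply Finset.sum_congr rfl
      intro i hi
      have hi' : i < m := mem_range.mp hi
      have := hrec (m + 1 + i) (by omega)
      rw [this]
      congr 2
      omega
    rw [e1, e2]
    rw [mul_add, Finset.mul_sum]
    have e3 : ∑ j ∈ Icc 1 m, t ^ m * (h (m - j) * (t ^ j + t⁻¹ ^ j))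
        = ∑ i ∈ range m, (h (m - (i + 1)) * t ^ (m - (i + 1)) + h (m - (i + 1)) * t ^ (m + 1 + i)) := by
      rw [← Finset.Ico_add_one_right_eq_Icc, Finset.sum_Ico_eq_sum_range]
      have : m + 1 - 1 = m := by omega
      rw [this]
      apply Finset.sum_congr rfl
      intro i hi
      have hi' : i < m := mem_range.mp hi
      have hpow : t ^ (m - (1 + i)) * t ^ (1 + i) = t ^ m := by
        rw [← pow_add]; congr 1; omega
      have hpow2 : t ^ m * (t ^ (1 + i))⁻¹ = t ^ (m - (1 + i)) := by
        rw [← hpow, mul_inv_cancel_right₀ (pow_ne_zero _ ht)]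
      have hpow3 : t ^ m * t ^ (1 + i) = t ^ (m + 1 + i) := by
        rw [← pow_add]; congr 1; omega
      have h1i : m - (1 + i) = m - (i + 1) := by omega
      rw [inv_pow, mul_comm (h (m - (1 + i))), ← mul_assoc, mul_add, hpow2, hpow3, h1i]
      ring
    rw [e3, Finset.sum_add_distrib]
    ring
  -- the γ side rewrite
  have gside : ∀ t : ℝ, t ≠ 0 → ∑ i ∈ range (m + 1), γ i * t ^ i * (1 + t) ^ (d - 2 * i)
      = t ^ m * ∑ i ∈ range (m + 1), γ i * (t + 2 + t⁻¹) ^ (m - i) := by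
    intro t ht
    rw [Finset.mul_sum]
    apply Finset.sum_congr rfl
    intro i hi
    have him : i ≤ m := by
      have := mem_range.mp hi; omega
    have e1 : t + 2 + t⁻¹ = (1 + t) ^ 2 * t⁻¹ := by field_simp; ring
    have e2 : d - 2 * i = 2 * (m - i) := by omega
    rw [e1, e2, pow_mul, mul_pow, inv_pow]
    have hsplit : t ^ m = t ^ i * t ^ (m - i) := by
      rw [← pow_add]; congr 1; omega
    rw [hsplit]
    have hne : t ^ (m - i) ≠ 0 := pow_ne_zero _ ht
    field_simp
  -- key polynomial identity
  have key : ∀ t : ℝ, t ≠ 0 → P.eval (t + 2 + t⁻¹) = Q.eval (t + 2 + t⁻¹) := by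
    intro t ht
    have htm : t ^ m ≠ 0 := pow_ne_zero _ ht
    apply mul_left_cancel₀ htm
    rw [hPe, hQe, ← gside t ht, ← hγ t, hside t ht]
    congr 1
    congr 1
    apply Finset.sum_congr rfl
    intro j _
    have harg : 2⁻¹ * (t + 2 + t⁻¹ - 2) = (t + t⁻¹) / 2 := by ring
    rw [harg, cheb_eval19 t ht j]
    ring
  have hPQ : P = Q := by
    apply Polynomial.eq_of_infinite_eval_eq
    have hinj : Set.InjOn (fun t : ℝ => t + 2 + t⁻¹) (Set.Ici 1) := by
      intro a ha b hb hab
      simp only [Set.mem_Ici] at ha hb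
      simp only at hab
      have ha0 : a ≠ 0 := by linarith
      have hb0 : b ≠ 0 := by linarith
      have hmul : (a - b) * (a * b - 1) = 0 := by
        have h2 : a + a⁻¹ = b + b⁻¹ := by linarith
        field_simp at h2
        nlinarith [h2]
      rcases mul_eq_zero.mp hmul with h' | h'
      · linarith
      · nlinarith
    have himg : Set.Infinite ((fun t : ℝ => t + 2 + t⁻¹) '' Set.Ici 1) :=
      Set.Infinite.image hinj (Set.Ici_infinite 1)
    apply Set.Infinite.mono _ himg
    rintro x ⟨t, ht, rfl⟩
    simp only [Set.mem_Ici] at ht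
    exact key t (by linarith)
  -- conclude
  intro u hu
  have humi : ∀ i ∈ range (m + 1), γ i * u ^ i = u ^ m * (γ i * (u⁻¹) ^ (m - i)) := by
    intro i hi
    have him : i ≤ m := by have := mem_range.mp hi; omega
    have hsplit : u ^ m = u ^ i * u ^ (m - i) := by rw [← pow_add]; congr 1; omega
    rw [inv_pow, hsplit]
    have hne : u ^ (m - i) ≠ 0 := pow_ne_zero _ hu
    field_simp
  rw [Finset.sum_congr rfl humi, ← Finset.mul_sum, ← hPe, hPQ, hQe]
  congr 1
  rw [Finset.mul_sum]
  congr 1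
  apply Finset.sum_congr rfl
  intro j _
  have : 2⁻¹ * (u⁻¹ - 2) = (1 / u - 2) / 2 := by
    rw [one_div]; ring
  rw [this]
  ring
end
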